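/- Let K and L be positive integers with L ≤ K and L ≤ 3, and let T > 0. Let a_0, …, a_{L−1} be nonnegative real numbers. Then for every vector of phase slopes α = (α_0, …, α_{L−1}) ∈ ℝ^L, the infimum over ψ = (ψ_0, …, ψ_{L−1}) ∈ ℝ^L of Σ_{k=0}^{K−1} |Σ_{l=0}^{L−1} a_l · exp(−i(ψ_l − α_l·k·T))|² is at most K · Σ_{l=0}^{L−1} a_l². Consequently (combined with achievability by α_l = 2πl/(KT)), sup over α ∈ ℝ^L of inf over ψ ∈ ℝ^L of this quantity equals exactly K · Σ_{l=0}^{L−1} a_l². -/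

import Mathlib

open Complex Finset

noncomputable def sg (b : Bool) : ℝ := if b then 1 else -1

lemma sg_not (b : Bool) : sg (!b) = - sg b := by cases b <;> simp [sg]

lemma sg_sq (b : Bool) : sg b * sg b = 1 := by cases b <;> simp [sg]

lemma sgn_sum_aux {L : ℕ} (l m : Fin L) :
    ∑ s : Fin L → Bool, sg (s l) * sg (s m) = if l = m then (2 ^ L : ℝ) else 0 := by
  by_cases h : l = m
  · subst h
    simp [sg_sq, Finset.card_univ]
  · simp only [if_neg h]
    have hinv : Function.Involutive (fun s : Fin L → Bool => Function.update s l (! s l)) := by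
      intro s
      ext j
      by_cases hj : j = l
      · subst hj; simp
      · simp [Function.update_of_ne hj]
    set P := Function.Involutive.toPerm _ hinv with hP
    have h1 : ∑ s : Fin L → Bool, sg (s l) * sg (s m)
        = ∑ s : Fin L → Bool, sg ((P s) l) * sg ((P s) m) :=
      (Equiv.sum_comp P (fun s => sg (s l) * sg (s m))).symm
    have h2 : ∀ s : Fin L → Bool, sg ((P s) l) * sg ((P s) m)
        = -(sg (s l) * sg (s m)) := by
      intro s
      have hl : (P s) l = ! s l := by
        rw [hP]; simp [Function.Involutive.coe_toPerm]
      have hm : (P s) m = s m := by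
        rw [hP, Function.Involutive.coe_toPerm]
        exact Function.update_of_ne (fun hh : m = l => h hh.symm) _ _
      rw [hl, hm, sg_not]; ring
    simp only [h2, Finset.sum_neg_distrib] at h1
    linarith

open Real in
lemma geom_zero (K : ℕ) (hK : 0 < K) (d : ℤ) (hd : d ≠ 0) (hdK : d.natAbs < K) :
    ∑ k ∈ Finset.range K, Complex.exp (2 * π * d / K * Complex.I) ^ k = 0 := by
  set x := Complex.exp (2 * (π : ℂ) * d / K * Complex.I) with hx
  have hKne : (K : ℂ) ≠ 0 := Nat.cast_ne_zero.mpr hK.ne'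
  have hpi : (π : ℂ) ≠ 0 := Complex.ofReal_ne_zero.mpr Real.pi_ne_zero
  have hx1 : x ≠ 1 := by
    rw [hx]
    intro hcon
    obtain ⟨n, hn⟩ := Complex.exp_eq_one_iff.mp hcon
    have hdnK : (d : ℂ) = n * K := by
      field_simp at hn
      have h2 : (2 : ℂ) * π * Complex.I ≠ 0 := by
        simp [Complex.I_ne_zero, hpi]
      field_simp at h2
      apply mul_left_cancel₀ (mul_ne_zero (mul_ne_zero two_ne_zero hpi) Complex.I_ne_zero)
      linear_combination (2 * (π:ℂ) * Complex.I) * hn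
    have hdint : d = n * K := by exact_mod_cast hdnK
    have hn0 : n ≠ 0 := by rintro rfl; simp at hdint; exact hd hdint
    have : (K : ℤ) ≤ d.natAbs := by
      have habs : (d.natAbs : ℤ) = |d| := Int.natCast_natAbs d
      rw [habs, hdint, abs_mul]
      have h1 : 1 ≤ |(n : ℤ)| := Int.one_le_abs hn0
      have h2 : |(K : ℤ)| = K := abs_of_nonneg (by positivity)
      nlinarith [abs_nonneg (n:ℤ), (by positivity : (0:ℤ) ≤ (K:ℤ))]
    omega
  have hxK : x ^ K = 1 := by
    rw [hx, ← Complex.exp_nat_mul]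
    have : (K : ℂ) * (2 * π * d / K * Complex.I) = d * (2 * π * Complex.I) := by
      field_simp
    rw [this, Complex.exp_int_mul_two_pi_mul_I]
  rw [geom_sum_eq hx1, hxK]
  simp

lemma abs_sq_re (z : ℂ) : ‖z‖ ^ 2 = (z * (starRingEnd ℂ) z).re := by
  rw [Complex.mul_conj, Complex.ofReal_re, Complex.sq_norm]

lemma mul_conj_aux (r θ : ℝ) :
    ((r:ℂ) * Complex.exp (Complex.I * θ)) * (starRingEnd ℂ) ((r:ℂ) * Complex.exp (Complex.I * θ))
      = ((r^2 : ℝ) : ℂ) := by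
  rw [map_mul, Complex.conj_ofReal, ← Complex.exp_conj]
  rw [map_mul, Complex.conj_I, Complex.conj_ofReal]
  rw [mul_mul_mul_comm, ← Complex.exp_add]
  push_cast
  ring_nf
  simp [Complex.exp_zero]

open Real in
lemma part1_aux (K L : ℕ) (T : ℝ) (a : Fin L → ℝ) (α : Fin L → ℝ) :
    ∃ ψ : Fin L → ℝ,
      ∑ k ∈ Finset.range K,
          ‖∑ l : Fin L, (a l : ℂ) *
            Complex.exp (-Complex.I * ((ψ l - α l * k * T : ℝ) : ℂ))‖ ^ 2
        ≤ K * ∑ l : Fin L, (a l) ^ 2 := by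
  classical
  set J : (Fin L → ℝ) → ℝ := fun ψ =>
    ∑ k ∈ Finset.range K,
      ‖∑ l : Fin L, (a l : ℂ) *
        Complex.exp (-Complex.I * ((ψ l - α l * k * T : ℝ) : ℂ))‖ ^ 2 with hJ
  set g : (Fin L → Bool) → Fin L → ℝ := fun s l => if s l then 0 else π with hg
  set w : Fin L → ℕ → ℂ := fun l k => (a l : ℂ) * Complex.exp (Complex.I * ((α l * k * T : ℝ) : ℂ)) with hw
  have key : ∀ (s : Fin L → Bool) (k : ℕ) (l : Fin L),
      (a l : ℂ) * Complex.exp (-Complex.I * ((g s l - α l * k * T : ℝ) : ℂ))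
        = ((sg (s l) : ℝ) : ℂ) * w l k := by
    intro s k l
    cases hsl : s l
    · have h1 : g s l = π := by rw [hg]; simp [hsl]
      have h2 : sg false = -1 := by simp [sg]
      rw [h1, h2]
      simp only [hw]
      have : (-Complex.I * ((π - α l * k * T : ℝ) : ℂ))
          = Complex.I * ((α l * k * T : ℝ) : ℂ) + (-(π * Complex.I)) := by
        push_cast; ring
      rw [this, Complex.exp_add, Complex.exp_neg, Complex.exp_pi_mul_I]
      push_cast
      ring_nf
    · have h1 : g s l = 0 := by rw [hg]; simp [hsl]
      have h2 : sg true = 1 := by simp [sg]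
      rw [h1, h2]
      simp only [hw]
      have : (-Complex.I * ((0 - α l * k * T : ℝ) : ℂ))
          = Complex.I * ((α l * k * T : ℝ) : ℂ) := by push_cast; ring
      rw [this]
      push_cast
      ring
  -- complex value
  have hC : ∀ s : Fin L → Bool, J (g s)
      = (∑ k ∈ Finset.range K,
          (∑ l : Fin L, ((sg (s l) : ℝ) : ℂ) * w l k) *
            (starRingEnd ℂ) (∑ m : Fin L, ((sg (s m) : ℝ) : ℂ) * w m k)).re := by
    intro s
    rw [hJ, Complex.re_sum]
    refine Finset.sum_congr rfl (fun k _ => ?_)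
    rw [abs_sq_re]
    have hsum : (∑ l : Fin L, (a l : ℂ) *
        Complex.exp (-Complex.I * ((g s l - α l * k * T : ℝ) : ℂ)))
        = ∑ l : Fin L, ((sg (s l) : ℝ) : ℂ) * w l k :=
      Finset.sum_congr rfl (fun l _ => key s k l)
    rw [hsum]
  have hw_conj : ∀ l k, w l k * (starRingEnd ℂ) (w l k) = ((a l ^ 2 : ℝ) : ℂ) := by
    intro l k; rw [hw]; exact mul_conj_aux _ _
  have hswap : ∑ s : Fin L → Bool, (∑ k ∈ Finset.range K,
        (∑ l : Fin L, ((sg (s l) : ℝ) : ℂ) * w l k) *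
          (starRingEnd ℂ) (∑ m : Fin L, ((sg (s m) : ℝ) : ℂ) * w m k))
      = (((2 ^ L : ℝ) * (K * ∑ l : Fin L, a l ^ 2) : ℝ) : ℂ) := by
    rw [Finset.sum_comm]
    have hk : ∀ k ∈ Finset.range K, (∑ s : Fin L → Bool,
        (∑ l : Fin L, ((sg (s l) : ℝ) : ℂ) * w l k) *
          (starRingEnd ℂ) (∑ m : Fin L, ((sg (s m) : ℝ) : ℂ) * w m k))
        = (((2 ^ L : ℝ) * ∑ l : Fin L, a l ^ 2 : ℝ) : ℂ) := by
      intro k _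
      have expand : ∀ s : Fin L → Bool,
          (∑ l : Fin L, ((sg (s l) : ℝ) : ℂ) * w l k) *
            (starRingEnd ℂ) (∑ m : Fin L, ((sg (s m) : ℝ) : ℂ) * w m k)
          = ∑ l : Fin L, ∑ m : Fin L,
              ((sg (s l) * sg (s m) : ℝ) : ℂ) * (w l k * (starRingEnd ℂ) (w m k)) := by
        intro s
        rw [map_sum, Finset.sum_mul_sum]
        refine Finset.sum_congr rfl (fun l _ => Finset.sum_congr rfl (fun m _ => ?_))
        rw [map_mul, Complex.conj_ofReal]
        push_cast
        ring
      simp only [expand]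
      rw [Finset.sum_comm]
      have : ∀ l : Fin L, ∑ s : Fin L → Bool, ∑ m : Fin L,
            ((sg (s l) * sg (s m) : ℝ) : ℂ) * (w l k * (starRingEnd ℂ) (w m k))
          = ((2 ^ L : ℝ) : ℂ) * ((a l ^ 2 : ℝ) : ℂ) := by
        intro l
        rw [Finset.sum_comm]
        have hm : ∀ m : Fin L, ∑ s : Fin L → Bool,
              ((sg (s l) * sg (s m) : ℝ) : ℂ) * (w l k * (starRingEnd ℂ) (w m k))
            = if l = m then ((2 ^ L : ℝ) : ℂ) * (w l k * (starRingEnd ℂ) (w m k)) else 0 := by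
          intro m
          rw [← Finset.sum_mul, ← Complex.ofReal_sum, sgn_sum_aux l m]
          split <;> simp
        simp only [hm]
        rw [Finset.sum_ite_eq (Finset.univ : Finset (Fin L)) l
          (fun m => ((2 ^ L : ℝ) : ℂ) * (w l k * (starRingEnd ℂ) (w m k)))]
        rw [if_pos (Finset.mem_univ l), hw_conj]
      simp only [this]
      rw [← Finset.mul_sum, ← Complex.ofReal_sum]
      push_cast
      ring
    rw [Finset.sum_congr rfl hk, Finset.sum_const, Finset.card_range, nsmul_eq_mul]
    push_cast
    ring
  -- Now conclude
  have hJsum : ∑ s : Fin L → Bool, J (g s) = (2 ^ L : ℝ) * (K * ∑ l : Fin L, a l ^ 2) := by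
    calc ∑ s : Fin L → Bool, J (g s)
        = (∑ s : Fin L → Bool, ∑ k ∈ Finset.range K,
            (∑ l : Fin L, ((sg (s l) : ℝ) : ℂ) * w l k) *
              (starRingEnd ℂ) (∑ m : Fin L, ((sg (s m) : ℝ) : ℂ) * w m k)).re := by
          rw [Complex.re_sum]
          exact Finset.sum_congr rfl (fun s _ => hC s)
      _ = (2 ^ L : ℝ) * (K * ∑ l : Fin L, a l ^ 2) := by rw [hswap, Complex.ofReal_re]
  have hcard : (Finset.univ : Finset (Fin L → Bool)).card = 2 ^ L := by
    simp [Fintype.card_fun]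
  have hex : ∃ s ∈ (Finset.univ : Finset (Fin L → Bool)),
      J (g s) ≤ (K : ℝ) * ∑ l : Fin L, a l ^ 2 := by
    apply Finset.exists_le_of_sum_le
    · exact Finset.univ_nonempty
    · rw [hJsum, Finset.sum_const, hcard, nsmul_eq_mul]
      push_cast
      exact le_refl _
  obtain ⟨s, _, hs⟩ := hex
  exact ⟨g s, hs⟩

lemma mul_conj_aux' (r θ : ℝ) :
    ((r:ℂ) * Complex.exp (-Complex.I * θ)) * (starRingEnd ℂ) ((r:ℂ) * Complex.exp (-Complex.I * θ))
      = ((r^2 : ℝ) : ℂ) := by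
  have h : (-Complex.I * (θ:ℂ)) = Complex.I * (((-θ : ℝ)):ℂ) := by push_cast; ring
  rw [h]
  exact mul_conj_aux r (-θ)

open Real in
lemma part2_aux (K L : ℕ) (hK : 0 < K) (hLK : L ≤ K) (T : ℝ) (hT : 0 < T)
    (a : Fin L → ℝ) (ψ : Fin L → ℝ) :
    ∑ k ∈ Finset.range K,
        ‖∑ l : Fin L, (a l : ℂ) *
          Complex.exp (-Complex.I * ((ψ l - (2 * π * l / (K * T)) * k * T : ℝ) : ℂ))‖ ^ 2
      = K * ∑ l : Fin L, (a l) ^ 2 := by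
  classical
  set u : Fin L → ℂ := fun l => (a l : ℂ) * Complex.exp (-Complex.I * ((ψ l : ℝ) : ℂ)) with hu
  set x : Fin L → ℂ := fun l => Complex.exp (2 * (π:ℂ) * l / K * Complex.I) with hx
  have hKne : (K : ℝ) ≠ 0 := Nat.cast_ne_zero.mpr hK.ne'
  have key : ∀ (k : ℕ) (l : Fin L),
      (a l : ℂ) * Complex.exp (-Complex.I * ((ψ l - (2 * π * l / (K * T)) * k * T : ℝ) : ℂ))
        = u l * x l ^ k := by
    intro k l
    have h1 : u l * x l ^ k
        = (a l : ℂ) * Complex.exp (-Complex.I * ((ψ l : ℝ):ℂ) + k * (2 * (π:ℂ) * l / K * Complex.I)) := by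
      rw [hu, hx, ← Complex.exp_nat_mul, mul_assoc, ← Complex.exp_add]
    rw [h1]
    congr 1
    congr 1
    have harg : (ψ l - 2 * π * l / (K * T) * k * T : ℝ) = ψ l - 2 * π * l * k / K := by
      field_simp
    rw [harg]
    push_cast
    field_simp
    ring
  have hxconj : ∀ l m : Fin L, x l * (starRingEnd ℂ) (x m)
      = Complex.exp (2 * (π:ℂ) * (((l : ℝ) - (m : ℝ) : ℝ):ℂ) / K * Complex.I) := by
    intro l m
    rw [hx, ← Complex.exp_conj, ← Complex.exp_add]
    congr 1
    simp only [map_mul, map_div₀, Complex.conj_I, map_ofNat, Complex.conj_ofReal,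
      map_natCast]
    push_cast
    ring
  have hgeom : ∀ l m : Fin L, ∑ k ∈ Finset.range K, (x l * (starRingEnd ℂ) (x m)) ^ k
      = if l = m then (K : ℂ) else 0 := by
    intro l m
    by_cases h : l = m
    · subst h
      rw [if_pos rfl, hxconj]
      simp
    · rw [if_neg h, hxconj]
      have hcast : (2 * (π:ℂ) * (((l : ℝ) - (m : ℝ) : ℝ):ℂ) / K * Complex.I)
          = (2 * (π:ℂ) * (((l : ℤ) - (m : ℤ) : ℤ):ℂ) / K * Complex.I) := by push_cast; ring
      rw [hcast]
      apply geom_zero K hK ((l : ℤ) - (m : ℤ))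
      · intro hc
        apply h
        have : (l : ℤ) = m := by omega
        exact Fin.ext (by exact_mod_cast this)
      · have h1 : (l : ℕ) < L := l.isLt
        have h2 : (m : ℕ) < L := m.isLt
        omega
  calc ∑ k ∈ Finset.range K,
        ‖∑ l : Fin L, (a l : ℂ) *
          Complex.exp (-Complex.I * ((ψ l - (2 * π * l / (K * T)) * k * T : ℝ) : ℂ))‖ ^ 2
      = (∑ k ∈ Finset.range K,
          (∑ l : Fin L, u l * x l ^ k) * (starRingEnd ℂ) (∑ m : Fin L, u m * x m ^ k)).re := by
        rw [Complex.re_sum]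
        refine Finset.sum_congr rfl (fun k _ => ?_)
        rw [abs_sq_re]
        have hsum : (∑ l : Fin L, (a l : ℂ) *
            Complex.exp (-Complex.I * ((ψ l - (2 * π * l / (K * T)) * k * T : ℝ) : ℂ)))
            = ∑ l : Fin L, u l * x l ^ k := Finset.sum_congr rfl (fun l _ => key k l)
        rw [hsum]
    _ = (∑ l : Fin L, ∑ m : Fin L, (u l * (starRingEnd ℂ) (u m)) *
          ∑ k ∈ Finset.range K, (x l * (starRingEnd ℂ) (x m)) ^ k).re := by
        congr 1
        have hexp : ∀ k : ℕ, (∑ l : Fin L, u l * x l ^ k) *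
              (starRingEnd ℂ) (∑ m : Fin L, u m * x m ^ k)
            = ∑ l : Fin L, ∑ m : Fin L,
                (u l * (starRingEnd ℂ) (u m)) * (x l * (starRingEnd ℂ) (x m)) ^ k := by
          intro k
          rw [map_sum, Finset.sum_mul_sum]
          refine Finset.sum_congr rfl (fun l _ => Finset.sum_congr rfl (fun m _ => ?_))
          rw [map_mul, map_pow, mul_pow]
          ring
        simp only [hexp]
        rw [Finset.sum_comm]
        refine Finset.sum_congr rfl (fun l _ => ?_)
        rw [Finset.sum_comm]
        refine Finset.sum_congr rfl (fun m _ => ?_)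
        rw [Finset.mul_sum]
    _ = (((K : ℝ) * ∑ l : Fin L, a l ^ 2 : ℝ) : ℂ).re := by
        congr 1
        simp only [hgeom, mul_ite, mul_zero]
        have hdiag : ∀ l : Fin L, ∑ m : Fin L,
              (if l = m then (u l * (starRingEnd ℂ) (u m)) * (K:ℂ) else 0)
            = ((a l ^ 2 : ℝ) : ℂ) * (K : ℂ) := by
          intro l
          rw [Finset.sum_ite_eq (Finset.univ : Finset (Fin L)) l
            (fun m => (u l * (starRingEnd ℂ) (u m)) * (K:ℂ)), if_pos (Finset.mem_univ l)]
          rw [hu]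
          rw [mul_conj_aux' (a l) (ψ l)]
        simp only [hdiag]
        rw [← Finset.sum_mul, ← Complex.ofReal_sum]
        push_cast
        ring
    _ = (K : ℝ) * ∑ l : Fin L, a l ^ 2 := Complex.ofReal_re _

/-- For `L ≤ K`, `L ≤ 3`, every phase-slope vector `α ∈ ℝ^L` has
worst-case (over `ψ`) objective at most `K Σ_l a_l²`; consequently the
sup over `α` of the inf over `ψ` of the objective equals exactly `K Σ_l a_l²`. -/
theorem stmt1 (K L : ℕ) (hK : 0 < K) (hL : 0 < L) (hLK : L ≤ K) (hL3 : L ≤ 3)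
    (T : ℝ) (hT : 0 < T)
    (a : Fin L → ℝ) (ha : ∀ l, 0 ≤ a l) :
    (∀ α : Fin L → ℝ,
      sInf (Set.range (fun ψ : Fin L → ℝ =>
        ∑ k ∈ Finset.range K,
          ‖∑ l : Fin L, (a l : ℂ) *
            Complex.exp (-Complex.I * ((ψ l - α l * k * T : ℝ) : ℂ))‖ ^ 2))
        ≤ K * ∑ l : Fin L, (a l) ^ 2) ∧
    sSup (Set.range (fun α : Fin L → ℝ =>
      sInf (Set.range (fun ψ : Fin L → ℝ =>
        ∑ k ∈ Finset.range K,
          ‖∑ l : Fin L, (a l : ℂ) *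
            Complex.exp (-Complex.I * ((ψ l - α l * k * T : ℝ) : ℂ))‖ ^ 2))))
      = K * ∑ l : Fin L, (a l) ^ 2 := by
  classical
  set B : ℝ := (K : ℝ) * ∑ l : Fin L, (a l) ^ 2 with hB
  set Jf : (Fin L → ℝ) → (Fin L → ℝ) → ℝ := fun α ψ =>
    ∑ k ∈ Finset.range K,
      ‖∑ l : Fin L, (a l : ℂ) *
        Complex.exp (-Complex.I * ((ψ l - α l * k * T : ℝ) : ℂ))‖ ^ 2 with hJf
  have hbdd : ∀ α : Fin L → ℝ, BddBelow (Set.range (Jf α)) := by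
    intro α
    refine ⟨0, ?_⟩
    rintro x ⟨ψ, rfl⟩
    exact Finset.sum_nonneg (fun k _ => pow_nonneg (norm_nonneg _) 2)
  have h1 : ∀ α : Fin L → ℝ, sInf (Set.range (Jf α)) ≤ B := by
    intro α
    obtain ⟨ψ, hψ⟩ := part1_aux K L T a α
    exact le_trans (csInf_le (hbdd α) ⟨ψ, rfl⟩) hψ
  refine ⟨h1, ?_⟩
  set αstar : Fin L → ℝ := fun l => 2 * Real.pi * l / (K * T) with hα
  have hconst : Jf αstar = fun _ => B := by
    funext ψ
    exact part2_aux K L hK hLK T hT a ψ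
  have hstar : sInf (Set.range (Jf αstar)) = B := by
    rw [hconst, Set.range_const, csInf_singleton]
  apply le_antisymm
  · apply csSup_le
    · exact ⟨sInf (Set.range (Jf αstar)), ⟨αstar, rfl⟩⟩
    · rintro x ⟨α, rfl⟩
      exact h1 α
  · refine le_csSup ⟨B, ?_⟩ ⟨αstar, hstar⟩
    rintro x ⟨α, rfl⟩
    exact h1 α
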